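/- Let P(z) = P^E(z^2) + z·P^O(z^2) be a real polynomial, where P^E and P^O collect the even- and odd-index coefficients. If P is nonzero at every z with Re(z) > 0, all nonzero coefficients of P have the same sign, and both P^E and P^O are not identically zero, then both P^E and P^O have only real non-positive zeros. -/

import Mathlib

open Polynomial Finset

/-- The even part `P^E` of a real polynomial: `P^E(z) = ∑ a_{2k} z^k`. -/
noncomputable def evenPart (P : Polynomial ℝ) : Polynomial ℝ :=
  ∑ k ∈ Finset.range (P.natDegree + 1), Polynomial.C (P.coeff (2 * k)) * Polynomial.X ^ k

/-- The odd part `P^O` of a real polynomial: `P^O(z) = ∑ a_{2k+1} z^k`. -/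
noncomputable def oddPart (P : Polynomial ℝ) : Polynomial ℝ :=
  ∑ k ∈ Finset.range (P.natDegree + 1), Polynomial.C (P.coeff (2 * k + 1)) * Polynomial.X ^ k

namespace HurwitzAux

lemma sum_range_two_mul (m : ℕ) (f : ℕ → ℂ) :
    ∑ j ∈ Finset.range (2 * m), f j = ∑ k ∈ Finset.range m, (f (2 * k) + f (2 * k + 1)) := by
  induction m with
  | zero => simp
  | succ m ih =>
      have h2 : 2 * (m + 1) = (2 * m + 1) + 1 := by ring
      rw [h2, Finset.sum_range_succ, Finset.sum_range_succ, ih, Finset.sum_range_succ]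
      ring

lemma eval_split (P : Polynomial ℝ) (z : ℂ) :
    (P.map (algebraMap ℝ ℂ)).eval z =
      ((evenPart P).map (algebraMap ℝ ℂ)).eval (z ^ 2) +
        z * ((oddPart P).map (algebraMap ℝ ℂ)).eval (z ^ 2) := by
  have hdeg : (P.map (algebraMap ℝ ℂ)).natDegree < 2 * (P.natDegree + 1) :=
    lt_of_le_of_lt natDegree_map_le (by omega)
  rw [Polynomial.eval_eq_sum_range' hdeg, sum_range_two_mul]
  simp only [Polynomial.coeff_map, evenPart, oddPart, Polynomial.map_sum, Polynomial.map_mul,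
    Polynomial.map_C, Polynomial.map_pow, Polynomial.map_X, Polynomial.eval_finset_sum,
    Polynomial.eval_mul, Polynomial.eval_C, Polynomial.eval_pow, Polynomial.eval_X]
  rw [Finset.mul_sum, ← Finset.sum_add_distrib]
  refine Finset.sum_congr rfl fun k _ => ?_
  rw [pow_succ, pow_mul]
  ring

lemma abs_multiset_prod (s : Multiset ℂ) : ‖s.prod‖ = (s.map (‖·‖)).prod := by
  induction s using Multiset.induction_on with
  | empty => simp
  | cons a s ih => simp [Multiset.prod_cons, norm_mul, ih]

lemma abs_add_conj_le (z r : ℂ) (hz : 0 < z.re) (hr : r.re ≤ 0) :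
    ‖z + (starRingEnd ℂ) r‖ ≤ ‖z - r‖ := by
  rw [Complex.norm_def, Complex.norm_def]
  apply Real.sqrt_le_sqrt
  simp only [Complex.normSq_apply, Complex.add_re, Complex.add_im, Complex.sub_re,
    Complex.sub_im, Complex.conj_re, Complex.conj_im]
  nlinarith [mul_nonneg hz.le (neg_nonneg.2 hr)]

lemma abs_add_conj_lt (z r : ℂ) (hz : 0 < z.re) (hr : r.re < 0) :
    ‖z + (starRingEnd ℂ) r‖ < ‖z - r‖ := by
  rw [Complex.norm_def, Complex.norm_def]
  apply Real.sqrt_lt_sqrt (Complex.normSq_nonneg _)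
  simp only [Complex.normSq_apply, Complex.add_re, Complex.add_im, Complex.sub_re,
    Complex.sub_im, Complex.conj_re, Complex.conj_im]
  nlinarith [mul_pos hz (neg_pos.2 hr)]

lemma exists_sqrt_pos_re (w : ℂ) (hw : ¬ ∃ x : ℝ, x ≤ 0 ∧ w = (x : ℂ)) :
    ∃ s : ℂ, s ^ 2 = w ∧ 0 < s.re := by
  obtain ⟨y, hy⟩ := IsAlgClosed.exists_pow_nat_eq w (n := 2) (by norm_num)
  rcases lt_trichotomy y.re 0 with h | h | h
  · refine ⟨-y, by rw [neg_sq]; exact hy, ?_⟩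
    simp only [Complex.neg_re]
    linarith
  · exfalso
    apply hw
    have hweq : w = ((-(y.im ^ 2) : ℝ) : ℂ) := by
      apply Complex.ext
      · rw [← hy]
        simp [pow_two, Complex.mul_re, h]
      · rw [← hy]
        simp [pow_two, Complex.mul_im, h]
    exact ⟨-(y.im ^ 2), neg_nonpos.mpr (sq_nonneg _), hweq⟩
  · exact ⟨y, hy, h⟩

lemma no_eq_abs (P : Polynomial ℝ)
    (hstable : ∀ z : ℂ, 0 < z.re → (P.map (algebraMap ℝ ℂ)).eval z ≠ 0)
    (hE : evenPart P ≠ 0) (hO : oddPart P ≠ 0)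
    (z : ℂ) (hz : 0 < z.re)
    (heq : ‖(P.map (algebraMap ℝ ℂ)).eval (-z)‖ =
      ‖(P.map (algebraMap ℝ ℂ)).eval z‖) : False := by
  obtain ⟨Q, hQdef⟩ : ∃ q : Polynomial ℂ, q = P.map (algebraMap ℝ ℂ) := ⟨_, rfl⟩
  rw [← hQdef] at heq
  replace hstable : ∀ z : ℂ, 0 < z.re → Q.eval z ≠ 0 := by
    intro y hy
    rw [hQdef]
    exact hstable y hy
  have hroots_le : ∀ r ∈ Q.roots, r.re ≤ 0 := by
    intro r hr
    by_contra h
    exact hstable r (lt_of_not_ge h) (Polynomial.isRoot_of_mem_roots hr)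
  have hQconj : Q.map (starRingEnd ℂ) = Q := by
    rw [hQdef]
    ext k
    simp [Polynomial.coeff_map, Complex.conj_ofReal]
  have hsplits : Q.Splits := IsAlgClosed.splits Q
  have hroots_conj : Q.roots.map (starRingEnd ℂ) = Q.roots := by
    conv_rhs => rw [← hQconj]
    exact (hsplits.roots_map (starRingEnd ℂ)).symm
  have hfac : Q = Polynomial.C Q.leadingCoeff *
      (Q.roots.map fun r => Polynomial.X - Polynomial.C r).prod :=
    hsplits.eq_prod_roots
  have e1 : ∀ w : ℂ, Q.eval w = Q.leadingCoeff * (Q.roots.map fun r => w - r).prod := by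
    intro w
    conv_lhs => rw [hfac]
    rw [Polynomial.eval_mul, Polynomial.eval_C, Polynomial.eval_multiset_prod, Multiset.map_map]
    exact congrArg (Q.leadingCoeff * ·)
      (congrArg Multiset.prod (Multiset.map_congr rfl fun r _ => by simp))
  have habs : ∀ w : ℂ, ‖Q.eval w‖
      = ‖Q.leadingCoeff‖ * (Q.roots.map fun r => ‖w - r‖).prod := by
    intro w
    rw [e1 w, norm_mul, abs_multiset_prod, Multiset.map_map]
    rfl
  have hQz := hstable z hz
  have hQne : Q.leadingCoeff ≠ 0 := by
    intro h0
    apply hQz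
    rw [Polynomial.leadingCoeff_eq_zero] at h0
    rw [h0]
    simp
  have habs_neg : ‖Q.eval (-z)‖
      = ‖Q.leadingCoeff‖ *
        (Q.roots.map fun r => ‖z + (starRingEnd ℂ) r‖).prod := by
    rw [habs (-z)]
    congr 1
    calc (Q.roots.map fun r => ‖-z - r‖).prod
        = (Q.roots.map fun r => ‖z + r‖).prod := by
          refine congrArg _ (Multiset.map_congr rfl fun r _ => ?_)
          rw [show -z - r = -(z + r) by ring, norm_neg]
      _ = ((Q.roots.map (starRingEnd ℂ)).map fun r => ‖z + r‖).prod := by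
          rw [hroots_conj]
      _ = (Q.roots.map fun r => ‖z + (starRingEnd ℂ) r‖).prod := by
          rw [Multiset.map_map]
          rfl
  have hprod_eq : (Q.roots.map fun r => ‖z + (starRingEnd ℂ) r‖).prod
      = (Q.roots.map fun r => ‖z - r‖).prod := by
    have h1 := heq
    rw [habs_neg, habs z] at h1
    exact mul_left_cancel₀ (by simpa using hQne) h1
  have hzr : ∀ r ∈ Q.roots, (0 : ℝ) < ‖z - r‖ := by
    intro r hr
    rw [norm_pos_iff]
    intro h0
    have hzr' : z = r := sub_eq_zero.mp h0
    exact hQz (hzr' ▸ Polynomial.isRoot_of_mem_roots hr)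
  have hre0 : ∀ r ∈ Q.roots, r.re = 0 := by
    intro r0 hr0
    by_contra hne
    have hr0lt : r0.re < 0 := lt_of_le_of_ne (hroots_le r0 hr0) hne
    set s := Q.roots.erase r0 with hs
    have hcons : r0 ::ₘ s = Q.roots := Multiset.cons_erase hr0
    have hsub : ∀ r ∈ s, r ∈ Q.roots := fun r hr =>
      Multiset.mem_of_le (Multiset.erase_le _ _) hr
    have h1 : (s.map fun r => ‖z + (starRingEnd ℂ) r‖).prod
        ≤ (s.map fun r => ‖z - r‖).prod :=
      Multiset.prod_map_le_prod_map₀ _ _ (fun r _ => norm_nonneg _)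
        (fun r hr => abs_add_conj_le z r hz (hroots_le r (hsub r hr)))
    have h2 : (0 : ℝ) < (s.map fun r => ‖z - r‖).prod := by
      apply Multiset.prod_pos
      intro a ha
      obtain ⟨r, hr, rfl⟩ := Multiset.mem_map.mp ha
      exact hzr r (hsub r hr)
    have hlt : ((r0 ::ₘ s).map fun r => ‖z + (starRingEnd ℂ) r‖).prod
        < ((r0 ::ₘ s).map fun r => ‖z - r‖).prod := by
      rw [Multiset.map_cons, Multiset.map_cons, Multiset.prod_cons, Multiset.prod_cons]
      calc ‖z + (starRingEnd ℂ) r0‖ *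
            (s.map fun r => ‖z + (starRingEnd ℂ) r‖).prod
          ≤ ‖z + (starRingEnd ℂ) r0‖ * (s.map fun r => ‖z - r‖).prod :=
            mul_le_mul_of_nonneg_left h1 (norm_nonneg _)
        _ < ‖z - r0‖ * (s.map fun r => ‖z - r‖).prod :=
            mul_lt_mul_of_pos_right (abs_add_conj_lt z r0 hz hr0lt) h2
    rw [hcons] at hlt
    exact absurd hprod_eq (ne_of_lt hlt)
  have hconj_neg : ∀ r ∈ Q.roots, (starRingEnd ℂ) r = -r := by
    intro r hr
    apply Complex.ext
    · simp [hre0 r hr]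
    · simp
  have hQneg : ∀ y : ℂ, Q.eval (-y) = (-1) ^ (Multiset.card Q.roots) * Q.eval y := by
    intro y
    rw [e1 (-y), e1 y]
    have hkey : (Q.roots.map fun r => -y - r).prod
        = (-1 : ℂ) ^ (Multiset.card Q.roots) * (Q.roots.map fun r => y - r).prod := by
      have hrw : (Q.roots.map fun r => -y - r) = Q.roots.map fun r => (-1) * (y + r) :=
        Multiset.map_congr rfl fun r _ => by ring
      rw [hrw, Multiset.prod_map_mul, Multiset.map_const', Multiset.prod_replicate]
      congr 1
      conv_lhs => rw [← hroots_conj, Multiset.map_map]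
      exact congrArg Multiset.prod (Multiset.map_congr rfl fun r hr => by
        simp [Function.comp_apply, hconj_neg r hr, sub_eq_add_neg])
    rw [hkey]
    ring
  rcases Nat.even_or_odd (Multiset.card Q.roots) with hpar | hpar
  · -- even: the odd part vanishes
    have hoz : ∀ w : ℂ, w ≠ 0 → ((oddPart P).map (algebraMap ℝ ℂ)).eval w = 0 := by
      intro w hw
      obtain ⟨y, hy⟩ := IsAlgClosed.exists_pow_nat_eq w (n := 2) (by norm_num)
      have hy0 : y ≠ 0 := by
        rintro rfl
        rw [← hy] at hw
        simp at hw
      have h1 := eval_split P y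
      have h2 := eval_split P (-y)
      rw [← hQdef] at h1 h2
      rw [neg_sq, hQneg y, hpar.neg_one_pow, one_mul] at h2
      have hyO : y * ((oddPart P).map (algebraMap ℝ ℂ)).eval (y ^ 2) = 0 := by
        linear_combination (h2 - h1) / 2
      rcases mul_eq_zero.mp hyO with h | h
      · exact absurd h hy0
      · rw [hy] at h; exact h
    have hOc : (oddPart P).map (algebraMap ℝ ℂ) = 0 := by
      apply Polynomial.eq_zero_of_infinite_isRoot
      apply Set.Infinite.mono (s := ({(0 : ℂ)} : Set ℂ)ᶜ)
      · intro w hw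
        exact hoz w (by simpa using hw)
      · exact Set.Finite.infinite_compl (Set.finite_singleton 0)
    exact hO ((Polynomial.map_eq_zero_iff (algebraMap ℝ ℂ).injective).mp hOc)
  · -- odd: the even part vanishes
    have hez : ∀ w : ℂ, ((evenPart P).map (algebraMap ℝ ℂ)).eval w = 0 := by
      intro w
      obtain ⟨y, hy⟩ := IsAlgClosed.exists_pow_nat_eq w (n := 2) (by norm_num)
      have h1 := eval_split P y
      have h2 := eval_split P (-y)
      rw [← hQdef] at h1 h2
      rw [neg_sq, hQneg y, hpar.neg_one_pow, neg_one_mul] at h2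
      have hEw : ((evenPart P).map (algebraMap ℝ ℂ)).eval (y ^ 2) = 0 := by
        linear_combination (-h1 - h2) / 2
      rw [hy] at hEw
      exact hEw
    have hEc : (evenPart P).map (algebraMap ℝ ℂ) = 0 :=
      Polynomial.funext fun w => by rw [hez w]; simp
    exact hE ((Polynomial.map_eq_zero_iff (algebraMap ℝ ℂ).injective).mp hEc)

end HurwitzAux

theorem stmt10 (P : Polynomial ℝ)
    (hstable : ∀ z : ℂ, 0 < z.re → (P.map (algebraMap ℝ ℂ)).eval z ≠ 0)
    (hsign : ∀ i j : ℕ, P.coeff i ≠ 0 → P.coeff j ≠ 0 → 0 < P.coeff i * P.coeff j)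
    (hE : evenPart P ≠ 0) (hO : oddPart P ≠ 0) :
    (∀ z : ℂ, ((evenPart P).map (algebraMap ℝ ℂ)).eval z = 0 → ∃ x : ℝ, x ≤ 0 ∧ z = (x : ℂ)) ∧
      (∀ z : ℂ, ((oddPart P).map (algebraMap ℝ ℂ)).eval z = 0 → ∃ x : ℝ, x ≤ 0 ∧ z = (x : ℂ)) := by
  constructor
  · intro w hw
    by_contra hcon
    obtain ⟨s, hs2, hsre⟩ := HurwitzAux.exists_sqrt_pos_re w hcon
    apply HurwitzAux.no_eq_abs P hstable hE hO s hsre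
    have h1 := HurwitzAux.eval_split P s
    have h2 := HurwitzAux.eval_split P (-s)
    rw [neg_sq] at h2
    rw [hs2, hw] at h1 h2
    rw [h1, h2, zero_add, zero_add, neg_mul, norm_neg]
  · intro w hw
    by_contra hcon
    obtain ⟨s, hs2, hsre⟩ := HurwitzAux.exists_sqrt_pos_re w hcon
    apply HurwitzAux.no_eq_abs P hstable hE hO s hsre
    have h1 := HurwitzAux.eval_split P s
    have h2 := HurwitzAux.eval_split P (-s)
    rw [neg_sq] at h2
    rw [hs2, hw] at h1 h2
    rw [h1, h2, mul_zero, mul_zero]
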